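/- Let Σ = { y ∈ ℤ_3 : every 3-adic digit of y is 0 or 1 } and let M be a positive integer with M ≡ 1 (mod 3). Then the set { λ ∈ ℤ_3 : λ ∈ Σ and M·λ ∈ Σ } is infinite. -/

import Mathlib

/-- The `j`-th digit of the 3-adic expansion of `y`. -/
noncomputable def padicDigit (y : ℤ_[3]) (j : ℕ) : ℕ := y.appr (j + 1) / 3 ^ j % 3

namespace CantorAux

/-- Partial sums of the digit sequence. -/
def sSeq (M : ℕ) : ℕ → ℕ
  | 0 => 0
  | j + 1 => sSeq M j +
      (if j = 0 then 1 else if M * sSeq M j / 3 ^ j % 3 = 2 then 1 else 0) * 3 ^ j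

/-- the digit chosen at step `j` -/
def aDig (M j : ℕ) : ℕ :=
  if j = 0 then 1 else if M * sSeq M j / 3 ^ j % 3 = 2 then 1 else 0

lemma sSeq_succ (M j : ℕ) : sSeq M (j + 1) = sSeq M j + aDig M j * 3 ^ j := rfl

lemma aDig_le_one (M j : ℕ) : aDig M j ≤ 1 := by
  unfold aDig; split <;> [rfl; split <;> simp]

lemma sSeq_lt (M k : ℕ) : sSeq M k < 3 ^ k := by
  induction k with
  | zero => simp [sSeq]
  | succ k ih =>
    have := aDig_le_one M k
    rw [sSeq_succ]
    have : aDig M k * 3 ^ k ≤ 3 ^ k := by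
      calc aDig M k * 3 ^ k ≤ 1 * 3 ^ k := Nat.mul_le_mul_right _ this
        _ = 3 ^ k := one_mul _
    have h3 : 3 ^ (k + 1) = 3 ^ k + 3 ^ k + 3 ^ k := by ring
    omega

lemma sSeq_mod (M : ℕ) {k n : ℕ} (h : k ≤ n) : ∃ t, sSeq M n = sSeq M k + 3 ^ k * t := by
  induction n with
  | zero =>
    have : k = 0 := Nat.le_zero.mp h
    subst this; exact ⟨0, by simp [sSeq]⟩
  | succ n ih =>
    rcases Nat.lt_or_ge k (n + 1) with hk | hk
    · obtain ⟨t, ht⟩ := ih (by omega)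
      refine ⟨t + aDig M n * 3 ^ (n - k), ?_⟩
      have hn : (3:ℕ) ^ n = 3 ^ k * 3 ^ (n - k) := by
        rw [← pow_add]; congr 1; omega
      rw [sSeq_succ, ht, hn]; ring
    · have : k = n + 1 := by omega
      subst this; exact ⟨0, by omega⟩

/-- the key digit property of `M * sSeq` -/
lemma digit_Ms (M : ℕ) (hM3 : M % 3 = 1) (j : ℕ) :
    M * sSeq M (j + 1) / 3 ^ j % 3 ≤ 1 := by
  have hstep : M * sSeq M (j + 1) / 3 ^ j = M * sSeq M j / 3 ^ j + M * aDig M j := by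
    rw [sSeq_succ, Nat.mul_add, ← Nat.mul_assoc]
    exact Nat.add_mul_div_right _ _ (by positivity)
  rw [hstep]
  rcases Nat.eq_zero_or_pos j with hj | hj
  · subst hj
    simp only [sSeq, pow_zero, Nat.mul_zero, Nat.zero_div, Nat.zero_add]
    have : aDig M 0 = 1 := rfl
    rw [this, Nat.mul_one, hM3]
  · have hj' : j ≠ 0 := by omega
    simp only [aDig, if_neg hj']
    split_ifs with h2 <;> omega

lemma appr_unique (x : ℤ_[3]) (k s : ℕ) (hs : s < 3 ^ k)
    (h : x - (s : ℤ_[3]) ∈ Ideal.span {(3 : ℤ_[3]) ^ k}) : x.appr k = s := by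
  have h1 := PadicInt.appr_spec k x
  have h2 : ((x.appr k : ℤ_[3]) - (s : ℤ_[3])) ∈ Ideal.span {(3 : ℤ_[3]) ^ k} := by
    have := Ideal.sub_mem _ h h1
    simpa using this
  have h3 : (((x.appr k : ℤ) - (s : ℤ) : ℤ) : ℤ_[3]) ∈ Ideal.span {((3 : ℕ) : ℤ_[3]) ^ k} := by
    push_cast
    convert h2 using 2 <;> norm_num
  rw [← PadicInt.norm_le_pow_iff_mem_span_pow, PadicInt.norm_int_le_pow_iff_dvd] at h3
  have hlt := PadicInt.appr_lt x k
  have habs : ((3 : ℤ) ^ k) ∣ ((x.appr k : ℤ) - s) := by exact_mod_cast h3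
  have h3k : (0 : ℤ) < 3 ^ k := by positivity
  have : (x.appr k : ℤ) - s = 0 := by
    have hs' : (s : ℤ) < 3 ^ k := by exact_mod_cast hs
    have hl' : (x.appr k : ℤ) < 3 ^ k := by exact_mod_cast hlt
    have hnn : (0 : ℤ) ≤ (x.appr k : ℤ) := Int.natCast_nonneg _
    have hnn2 : (0 : ℤ) ≤ (s : ℤ) := Int.natCast_nonneg _
    exact Int.eq_zero_of_abs_lt_dvd habs (abs_lt.mpr ⟨by omega, by omega⟩)
  omega

lemma mem_span_of_nat_dvd {a b : ℕ} (k : ℕ) (h : 3 ^ k ∣ b) :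
    ((a * b : ℕ) : ℤ_[3]) ∈ Ideal.span {(3 : ℤ_[3]) ^ k} := by
  rw [Ideal.mem_span_singleton]
  rcases h with ⟨c, hc⟩
  exact ⟨a * c, by rw [hc]; push_cast; ring⟩

lemma mem_span_iff_norm (x : ℤ_[3]) (k : ℕ) :
    x ∈ Ideal.span {(3 : ℤ_[3]) ^ k} ↔ ‖x‖ ≤ (3 : ℝ) ^ (-(k : ℤ)) := by
  rw [show (3 : ℤ_[3]) = ((3 : ℕ) : ℤ_[3]) by norm_num,
    ← PadicInt.norm_le_pow_iff_mem_span_pow]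
  norm_num

lemma padicDigit_three_mul_succ (x : ℤ_[3]) (j : ℕ) :
    padicDigit (3 * x) (j + 1) = padicDigit x j := by
  have h : (3 * x).appr (j + 2) = 3 * x.appr (j + 1) := by
    apply appr_unique
    · have := PadicInt.appr_lt x (j + 1)
      have h2 : (3:ℕ) ^ (j + 2) = 3 * 3 ^ (j + 1) := by ring
      omega
    · have hs := PadicInt.appr_spec (j + 1) x
      rw [Ideal.mem_span_singleton] at hs ⊢
      obtain ⟨c, hc⟩ := hs
      refine ⟨c, ?_⟩
      have : (3 : ℤ_[3]) * x - ((3 * x.appr (j + 1) : ℕ) : ℤ_[3])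
          = 3 * (x - (x.appr (j + 1) : ℤ_[3])) := by push_cast; ring
      rw [this, hc]
      have hp : ((3:ℤ_[3]) : ℤ_[3]) = ((3:ℕ) : ℤ_[3]) := by norm_num
      rw [show ((3:ℕ) : ℤ_[3]) ^ (j+1) = (3 : ℤ_[3]) ^ (j+1) by norm_num]
      ring
  unfold padicDigit
  rw [show j + 1 + 1 = j + 2 from rfl, h]
  have : (3 : ℕ) ^ (j + 1) = 3 * 3 ^ j := by ring
  rw [this, Nat.mul_div_mul_left _ _ (by norm_num : (0:ℕ) < 3)]

lemma padicDigit_three_mul_zero (x : ℤ_[3]) : padicDigit (3 * x) 0 = 0 := by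
  have h : (3 * x).appr 1 = 0 := by
    apply appr_unique _ _ _ (by norm_num)
    rw [Ideal.mem_span_singleton]
    exact ⟨x, by push_cast; ring⟩
  unfold padicDigit
  simp [h]

end CantorAux

open CantorAux in
theorem cantor_intersection_infinite_of_one_mod_three (M : ℕ) (hM : 0 < M)
    (hM3 : M % 3 = 1) :
    {lam : ℤ_[3] | (∀ j, padicDigit lam j ≤ 1) ∧
      ∀ j, padicDigit ((M : ℤ_[3]) * lam) j ≤ 1}.Infinite := by
  set S := {lam : ℤ_[3] | (∀ j, padicDigit lam j ≤ 1) ∧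
      ∀ j, padicDigit ((M : ℤ_[3]) * lam) j ≤ 1} with hS
  -- the partial-sum sequence in ℤ_[3]
  set f : ℕ → ℤ_[3] := fun n => ((sSeq M n : ℕ) : ℤ_[3]) with hf
  have hspan : ∀ {k n : ℕ}, k ≤ n → f n - f k ∈ Ideal.span {(3 : ℤ_[3]) ^ k} := by
    intro k n hkn
    obtain ⟨t, ht⟩ := sSeq_mod M hkn
    rw [Ideal.mem_span_singleton]
    refine ⟨(t : ℤ_[3]), ?_⟩
    simp only [hf, ht]
    push_cast
    ring
  have hdist : ∀ n m N : ℕ, N ≤ n → N ≤ m → dist (f n) (f m) ≤ (3 : ℝ) ^ (-(N : ℤ)) := by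
    intro n m N hn hm
    rw [dist_eq_norm]
    have : f n - f m ∈ Ideal.span {(3 : ℤ_[3]) ^ N} := by
      have := Ideal.sub_mem _ (hspan hn) (hspan hm)
      simpa using this
    exact (mem_span_iff_norm _ _).mp this
  have hb : Filter.Tendsto (fun N : ℕ => (3 : ℝ) ^ (-(N : ℤ))) Filter.atTop (nhds 0) := by
    have := tendsto_pow_atTop_nhds_zero_of_lt_one (by norm_num : (0:ℝ) ≤ 3⁻¹)
      (by norm_num : (3:ℝ)⁻¹ < 1)
    convert this using 2 with N
    rw [zpow_neg, zpow_natCast, inv_pow]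
  have hcauchy : CauchySeq f := cauchySeq_of_le_tendsto_0 _ hdist hb
  obtain ⟨lam, hlim⟩ := cauchySeq_tendsto_of_complete hcauchy
  -- lam agrees with the partial sums
  have hmem : ∀ k, lam - f k ∈ Ideal.span {(3 : ℤ_[3]) ^ k} := by
    intro k
    rw [mem_span_iff_norm]
    have h1 : Filter.Tendsto (fun n => ‖f n - f k‖) Filter.atTop (nhds ‖lam - f k‖) :=
      ((hlim.sub tendsto_const_nhds).norm)
    apply le_of_tendsto h1
    filter_upwards [Filter.eventually_ge_atTop k] with n hn
    exact (mem_span_iff_norm _ _).mp (hspan hn)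
  have happr : ∀ k, lam.appr k = sSeq M k := fun k =>
    appr_unique _ _ _ (sSeq_lt M k) (hmem k)
  -- digits of lam
  have hd1 : ∀ j, padicDigit lam j ≤ 1 := by
    intro j
    unfold padicDigit
    rw [happr, sSeq_succ, Nat.add_mul_div_right _ _ (by positivity : (0:ℕ) < 3 ^ j),
      Nat.div_eq_of_lt (sSeq_lt M j)]
    have := aDig_le_one M j
    omega
  -- digits of M * lam
  have hd2 : ∀ j, padicDigit ((M : ℤ_[3]) * lam) j ≤ 1 := by
    intro j
    have happr2 : ((M : ℤ_[3]) * lam).appr (j + 1) = M * sSeq M (j + 1) % 3 ^ (j + 1) := by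
      apply appr_unique
      · exact Nat.mod_lt _ (by positivity)
      · have h1 : (M : ℤ_[3]) * lam - ((M * sSeq M (j + 1) : ℕ) : ℤ_[3])
            = (M : ℤ_[3]) * (lam - f (j + 1)) := by
          simp only [hf]; push_cast; ring
        have hmem2 : ((M * sSeq M (j + 1) : ℕ) : ℤ_[3])
            - ((M * sSeq M (j + 1) % 3 ^ (j + 1) : ℕ) : ℤ_[3])
            ∈ Ideal.span {(3 : ℤ_[3]) ^ (j + 1)} := by
          rw [Ideal.mem_span_singleton]
          refine ⟨((M * sSeq M (j + 1) / 3 ^ (j + 1) : ℕ) : ℤ_[3]), ?_⟩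
          have hsplit := congrArg (fun n : ℕ => (n : ℤ_[3]))
            (Nat.div_add_mod (M * sSeq M (j + 1)) (3 ^ (j + 1)))
          push_cast at hsplit
          push_cast
          linear_combination -hsplit
        have hmem1 : (M : ℤ_[3]) * lam - ((M * sSeq M (j + 1) : ℕ) : ℤ_[3])
            ∈ Ideal.span {(3 : ℤ_[3]) ^ (j + 1)} := by
          rw [h1]
          exact Ideal.mul_mem_left _ _ (hmem (j + 1))
        have := Ideal.add_mem _ hmem1 hmem2
        simpa using this
    unfold padicDigit
    rw [happr2]
    have hkey : M * sSeq M (j + 1) % 3 ^ (j + 1) / 3 ^ j % 3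
        = M * sSeq M (j + 1) / 3 ^ j % 3 := by
      conv_rhs => rw [← Nat.mod_mul_right_div_self,
        show (3:ℕ) ^ j * 3 = 3 ^ (j + 1) by ring]
      have hlt : M * sSeq M (j + 1) % 3 ^ (j + 1) / 3 ^ j < 3 := by
        apply Nat.div_lt_of_lt_mul
        have h1 := Nat.mod_lt (M * sSeq M (j + 1)) (show 0 < 3 ^ (j + 1) by positivity)
        have h2 : (3:ℕ) ^ (j + 1) = 3 ^ j * 3 := by ring
        omega
      exact Nat.mod_eq_of_lt hlt
    rw [hkey]
    exact digit_Ms M hM3 j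
  have hlam_mem : lam ∈ S := ⟨hd1, hd2⟩
  have hlam_ne : lam ≠ 0 := by
    intro h0
    have h1 : lam.appr 1 = sSeq M 1 := happr 1
    have h2 : sSeq M 1 = 1 := by simp [sSeq, aDig]
    have h3 : (0 : ℤ_[3]).appr 1 = 0 :=
      appr_unique _ _ _ (by norm_num) (by simp)
    rw [h0, h3] at h1
    omega
  -- S is closed under multiplication by 3
  have hclosed : ∀ x ∈ S, 3 * x ∈ S := by
    rintro x ⟨hx1, hx2⟩
    constructor
    · intro j
      cases j with
      | zero => rw [padicDigit_three_mul_zero]; omega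
      | succ j => rw [padicDigit_three_mul_succ]; exact hx1 j
    · intro j
      have hcomm : (M : ℤ_[3]) * (3 * x) = 3 * ((M : ℤ_[3]) * x) := by ring
      rw [hcomm]
      cases j with
      | zero => rw [padicDigit_three_mul_zero]; omega
      | succ j => rw [padicDigit_three_mul_succ]; exact hx2 j
  -- the infinite family
  have hmem3 : ∀ n : ℕ, (3 : ℤ_[3]) ^ n * lam ∈ S := by
    intro n
    induction n with
    | zero => simpa using hlam_mem
    | succ n ih =>
      have : (3 : ℤ_[3]) ^ (n + 1) * lam = 3 * ((3 : ℤ_[3]) ^ n * lam) := by ring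
      rw [this]
      exact hclosed _ ih
  have hinj : Function.Injective (fun n : ℕ => (3 : ℤ_[3]) ^ n * lam) := by
    intro n m hnm
    simp only at hnm
    have h3 : (3 : ℤ_[3]) = ((3 : ℕ) : ℤ_[3]) := by norm_num
    rw [h3] at hnm
    have hv := congrArg PadicInt.valuation hnm
    rw [PadicInt.valuation_p_pow_mul n lam hlam_ne,
      PadicInt.valuation_p_pow_mul m lam hlam_ne] at hv
    omega
  exact Set.infinite_of_injective_forall_mem hinj hmem3
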